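/- For a slow-fading Gaussian channel with K positive fading states g_1 > ... > g_K > 0, probabilities p_k with cumulative sums F_k = p_1+...+p_k, n_k = 1/g_k, and dominating index sequence π_s < ... < π_w of active states (as determined by the marginal utility functions), the expected capacity over one-block delay equals C_exp = F_{π_s} log(F_{π_s}/n_{π_s}) + ∑_{m=s+1}^{w} (F_{π_m} - F_{π_{m-1}}) log((F_{π_m} - F_{π_{m-1}})/(n_{π_m} - n_{π_{m-1}})) + F_{π_w} log((n_{π_w}+1)/F_{π_w}). -/

import Mathlib

open Real

/-- Crossing point of the marginal utility functions `u_k` and `u_l`. -/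
noncomputable def zc (n F : ℕ → ℝ) (k l : ℕ) : ℝ :=
  (F k * n l - F l * n k) / (F l - F k)

/-- Achievable expected-rate values of the one-block power allocation
program: maximize `∑_k F_k log((1+β_k g_k)/(1+β_{k-1} g_k))` over
`0 = β_0 ≤ β_1 ≤ ⋯ ≤ β_K ≤ 1`. -/
def CexpSet (K : ℕ) (g F : ℕ → ℝ) : Set ℝ :=
  {r | ∃ β : ℕ → ℝ, β 0 = 0 ∧ (∀ k, 1 ≤ k → k ≤ K → β (k - 1) ≤ β k) ∧ β K ≤ 1 ∧
    r = ∑ k ∈ Finset.Icc 1 K,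
      F k * Real.log ((1 + β k * g k) / (1 + β (k - 1) * g k))}

lemma tele1 (f : ℕ → ℝ) (K : ℕ) : ∑ k ∈ Finset.Icc 1 K, (f k - f (k-1)) = f K - f 0 := by
  induction K with
  | zero => simp
  | succ K ih =>
    rw [← Finset.insert_Icc_right_eq_Icc_add_one (by omega), Finset.sum_insert (by simp)]
    simp only [Nat.add_sub_cancel]
    rw [ih]; ring

lemma sum_shift (f : ℕ → ℝ) (s : ℕ) : ∀ w, s ≤ w →
    ∑ m ∈ Finset.Icc s w, f m = f w + ∑ m ∈ Finset.Icc (s+1) w, f (m-1) := by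
  intro w
  induction w with
  | zero => intro h; interval_cases s <;> simp
  | succ w ih =>
    intro h
    rcases Nat.lt_or_ge s (w+1) with h' | h'
    · have hsw : s ≤ w := by omega
      rw [← Finset.insert_Icc_right_eq_Icc_add_one (by omega : s ≤ w + 1),
        Finset.sum_insert (by simp), ih hsw,
        ← Finset.insert_Icc_right_eq_Icc_add_one (by omega : s + 1 ≤ w + 1),
        Finset.sum_insert (by simp)]
      simp only [Nat.add_sub_cancel]
      try ring
    · have : s = w + 1 := by omega
      subst this
      simp

lemma tele2 (h : ℕ → ℝ) (s : ℕ) : ∀ w, s ≤ w →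
    ∑ m ∈ Finset.Icc (s+1) w, (h (m-1) - h m) = h s - h w := by
  intro w
  induction w with
  | zero =>
    intro hw
    have hs : s = 0 := by omega
    subst hs
    simp
  | succ w ih =>
    intro hw
    rcases Nat.lt_or_ge s (w+1) with h' | h'
    · rw [← Finset.insert_Icc_right_eq_Icc_add_one (by omega : s + 1 ≤ w + 1),
        Finset.sum_insert (by simp), ih (by omega)]
      simp only [Nat.add_sub_cancel]
      ring
    · have : s = w + 1 := by omega
      subst this; simp

lemma partition_sum (a : ℕ → ℝ) (ha : Monotone a) (f : ℝ → ℝ) (s : ℕ) : ∀ w, s ≤ w →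
    ∀ y, a s ≤ y → y ≤ a (w+1) →
    ∑ m ∈ Finset.Icc s w, (f (max (a m) (min y (a (m+1)))) - f (a m)) = f y - f (a s) := by
  intro w
  induction w with
  | zero =>
    intro hw y h1 h2
    have : s = 0 := by omega
    subst this
    simp only [Finset.Icc_self, Finset.sum_singleton]
    rw [min_eq_left h2, max_eq_right h1]
  | succ w ih =>
    intro hw y h1 h2
    rcases Nat.lt_or_ge s (w+1) with h' | h'
    · rw [← Finset.insert_Icc_right_eq_Icc_add_one (by omega : s ≤ w + 1), Finset.sum_insert (by simp)]
      rcases le_or_gt y (a (w+1)) with hy | hy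
      · rw [ih (by omega) y h1 hy]
        have : max (a (w+1)) (min y (a (w+1+1))) = a (w+1) := by
          rw [max_eq_left]
          exact le_trans (min_le_left _ _) hy
        rw [this]; ring
      · have hrw : ∀ m ∈ Finset.Icc s w,
            (f (max (a m) (min y (a (m+1)))) - f (a m)) =
            (f (max (a m) (min (a (w+1)) (a (m+1)))) - f (a m)) := by
          intro m hm
          simp only [Finset.mem_Icc] at hm
          have h1' : a (m+1) ≤ a (w+1) := ha (by omega)
          rw [min_eq_right (le_trans h1' hy.le), min_eq_right h1']
        rw [Finset.sum_congr rfl hrw, ih (by omega) (a (w+1)) (ha (by omega)) le_rfl]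
        have : max (a (w+1)) (min y (a (w+1+1))) = y := by
          rw [min_eq_left h2, max_eq_right hy.le]
        rw [this]; ring
    · have : s = w + 1 := by omega
      subst this
      simp only [Finset.Icc_self, Finset.sum_singleton]
      rw [min_eq_left h2, max_eq_right h1]

lemma z3' (Fa Fb Fc na nb nc t0 : ℝ) (hFa : 0 < Fa) (hFc : 0 < Fc)
    (heq : Fa * (nc + t0) = Fc * (na + t0)) (hle : Fb * (na + t0) ≤ Fa * (nb + t0)) :
    Fb * (nc + t0) ≤ Fc * (nb + t0) := by
  have h1 : Fc * (Fb * (na + t0)) ≤ Fc * (Fa * (nb + t0)) :=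
    mul_le_mul_of_nonneg_left hle hFc.le
  have h2 : Fb * (Fa * (nc + t0)) = Fb * (Fc * (na + t0)) := by rw [heq]
  have h3 : Fa * (Fb * (nc + t0)) ≤ Fa * (Fc * (nb + t0)) := by nlinarith [h1, h2]
  exact le_of_mul_le_mul_left h3 hFa

lemma logL (c1 c2 C1 C2 x y : ℝ) (hx1 : 0 < C1 + x) (hx2 : 0 < C2 + x) (hxy : x ≤ y)
    (hdom : ∀ t, x ≤ t → t ≤ y → c2 * (C1 + t) ≤ c1 * (C2 + t)) :
    c2 * (Real.log (C2 + y) - Real.log (C2 + x)) ≤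
      c1 * (Real.log (C1 + y) - Real.log (C1 + x)) := by
  have hpos1 : ∀ t ∈ Set.Icc x y, 0 < C1 + t := fun t ht => by
    have := ht.1; linarith
  have hpos2 : ∀ t ∈ Set.Icc x y, 0 < C2 + t := fun t ht => by
    have := ht.1; linarith
  set h : ℝ → ℝ := fun t => c1 * Real.log (C1 + t) - c2 * Real.log (C2 + t) with hh
  have hderiv : ∀ t ∈ Set.Icc x y,
      HasDerivAt h (c1 * (1/(C1 + t)) - c2 * (1/(C2 + t))) t := by
    intro t ht
    have d1 : HasDerivAt (fun t => C1 + t) 1 t := by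
      simpa using (hasDerivAt_id t).const_add C1
    have d2 : HasDerivAt (fun t => C2 + t) 1 t := by
      simpa using (hasDerivAt_id t).const_add C2
    have l1 : HasDerivAt (fun t => Real.log (C1 + t)) (1/(C1 + t)) t := by
      simpa using d1.log (ne_of_gt (hpos1 t ht))
    have l2 : HasDerivAt (fun t => Real.log (C2 + t)) (1/(C2 + t)) t := by
      simpa using d2.log (ne_of_gt (hpos2 t ht))
    exact (l1.const_mul c1).sub (l2.const_mul c2)
  have hmono : MonotoneOn h (Set.Icc x y) := by
    apply monotoneOn_of_deriv_nonneg (convex_Icc x y)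
    · intro t ht
      exact (hderiv t ht).continuousAt.continuousWithinAt
    · intro t ht
      rw [interior_Icc] at ht
      exact (hderiv t (Set.Ioo_subset_Icc_self ht)).differentiableAt.differentiableWithinAt
    · intro t ht
      rw [interior_Icc] at ht
      rw [(hderiv t (Set.Ioo_subset_Icc_self ht)).deriv]
      have p1 := hpos1 t (Set.Ioo_subset_Icc_self ht)
      have p2 := hpos2 t (Set.Ioo_subset_Icc_self ht)
      have hd := hdom t ht.1.le ht.2.le
      rw [sub_nonneg, mul_one_div, mul_one_div, div_le_div_iff₀ p2 p1]
      nlinarith [hd]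
  have := hmono (Set.left_mem_Icc.2 hxy) (Set.right_mem_Icc.2 hxy) hxy
  simp only [hh] at this
  linarith

lemma zc_le_iff (n F : ℕ → ℝ) (k l : ℕ) (hF : F k < F l) (t : ℝ) :
    zc n F k l ≤ t ↔ F k * (n l + t) ≤ F l * (n k + t) := by
  unfold zc
  rw [div_le_iff₀ (by linarith)]
  constructor <;> intro h <;> nlinarith [h]

lemma le_zc_iff (n F : ℕ → ℝ) (k l : ℕ) (hF : F k < F l) (t : ℝ) :
    t ≤ zc n F k l ↔ F l * (n k + t) ≤ F k * (n l + t) := by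
  unfold zc
  rw [le_div_iff₀ (by linarith)]
  constructor <;> intro h <;> nlinarith [h]

lemma zc_eq (n F : ℕ → ℝ) (k l : ℕ) (hF : F k < F l) :
    F k * (n l + zc n F k l) = F l * (n k + zc n F k l) := by
  unfold zc
  have h0 : F l - F k ≠ 0 := by linarith
  field_simp
  ring

lemma zc_add_l (n F : ℕ → ℝ) (k l : ℕ) (hF : F k < F l) :
    n k + zc n F k l = F k * (n l - n k) / (F l - F k) := by
  unfold zc
  have h0 : F l - F k ≠ 0 := by linarith
  field_simp
  ring

lemma zc_add_r (n F : ℕ → ℝ) (k l : ℕ) (hF : F k < F l) :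
    n l + zc n F k l = F l * (n l - n k) / (F l - F k) := by
  unfold zc
  have h0 : F l - F k ≠ 0 := by linarith
  field_simp
  ring

/-- Explicit expression of the one-block expected capacity in terms of the
active indices `σ_s, …, σ_w` of the dominating marginal utility function. -/
theorem expected_capacity_one_block
    (K I s w : ℕ) (hK : 1 ≤ K) (g p : ℕ → ℝ)
    (hg : ∀ k l, 1 ≤ k → k < l → l ≤ K → g l < g k) (hgK : 0 < g K)
    (hp : ∀ k, 1 ≤ k → k ≤ K → 0 < p k)
    (hpsum : ∑ k ∈ Finset.Icc 1 K, p k = 1)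
    (F n : ℕ → ℝ)
    (hF : ∀ k, F k = ∑ j ∈ Finset.Icc 1 k, p j)
    (hn : ∀ k, n k = 1 / g k)
    (σ : ℕ → ℕ)
    (hI : 1 ≤ I) (hσ1 : σ 1 = 1) (hσI : σ I = K)
    (hσmono : ∀ i j, 1 ≤ i → i < j → j ≤ I → σ i < σ j)
    (hmin : ∀ i, 1 ≤ i → i < I → ∀ l, σ i < l → l ≤ K →
      zc n F (σ i) (σ (i + 1)) ≤ zc n F (σ i) l)
    (hmax : ∀ i, 1 ≤ i → i < I → ∀ l, σ (i + 1) < l → l ≤ K →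
      zc n F (σ i) (σ (i + 1)) < zc n F (σ i) l)
    -- `s` is the largest `i ∈ {1,…,I}` with `z_{σ_{i-1},σ_i} ≤ 0`
    -- (convention `z_{σ_0,σ_1} = -n_1 ≤ 0`):
    (hs1 : 1 ≤ s) (hsI : s ≤ I)
    (hsle : s = 1 ∨ zc n F (σ (s - 1)) (σ s) ≤ 0)
    (hsmax : ∀ i, s < i → i ≤ I → 0 < zc n F (σ (i - 1)) (σ i))
    -- `w` is the largest `i ∈ {1,…,I}` with `z_{σ_{i-1},σ_i} < 1`:
    (hw1 : 1 ≤ w) (hwI : w ≤ I)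
    (hwlt : w = 1 ∨ zc n F (σ (w - 1)) (σ w) < 1)
    (hwmax : ∀ i, w < i → i ≤ I → 1 ≤ zc n F (σ (i - 1)) (σ i)) :
    sSup (CexpSet K g F) =
      F (σ s) * Real.log (F (σ s) / n (σ s)) +
      (∑ m ∈ Finset.Icc (s + 1) w,
        (F (σ m) - F (σ (m - 1))) *
          Real.log ((F (σ m) - F (σ (m - 1))) / (n (σ m) - n (σ (m - 1))))) +
      F (σ w) * Real.log ((n (σ w) + 1) / F (σ w)) := by
  -- ------------------------------------------------------------------
  -- Basic positivity and monotonicity facts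
  -- ------------------------------------------------------------------
  have hgpos : ∀ k, 1 ≤ k → k ≤ K → 0 < g k := by
    intro k h1 h2
    rcases eq_or_lt_of_le h2 with h | h
    · rw [h]; exact hgK
    · exact hgK.trans (hg k K h1 h le_rfl)
  have hnpos : ∀ k, 1 ≤ k → k ≤ K → 0 < n k := by
    intro k h1 h2; rw [hn]; exact one_div_pos.2 (hgpos k h1 h2)
  have hnlt : ∀ k l, 1 ≤ k → k < l → l ≤ K → n k < n l := by
    intro k l h1 h2 h3
    rw [hn, hn]
    exact one_div_lt_one_div_of_lt (hgpos l (by omega) h3) (hg k l h1 h2 h3)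
  have hF0 : F 0 = 0 := by rw [hF]; simp
  have hFsum : ∀ k l : ℕ, k ≤ l → F l = F k + ∑ j ∈ Finset.Ioc k l, p j := by
    intro k l hkl
    rw [hF, hF]
    have e1 : Finset.Icc 1 l = Finset.Ioc 0 l := Finset.Icc_add_one_left_eq_Ioc 0 l
    have e2 : Finset.Icc 1 k = Finset.Ioc 0 k := Finset.Icc_add_one_left_eq_Ioc 0 k
    have hdis : Disjoint (Finset.Ioc 0 k) (Finset.Ioc k l) := by
      simp only [Finset.disjoint_left, Finset.mem_Ioc]
      omega
    rw [e1, e2, ← Finset.Ioc_union_Ioc_eq_Ioc (Nat.zero_le k) hkl, Finset.sum_union hdis]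
  have hFlt : ∀ k l : ℕ, k < l → l ≤ K → F k < F l := by
    intro k l h1 h2
    rw [hFsum k l h1.le]
    have hpos : 0 < ∑ j ∈ Finset.Ioc k l, p j := by
      apply Finset.sum_pos
      · intro j hj
        simp only [Finset.mem_Ioc] at hj
        exact hp j (by omega) (by omega)
      · exact ⟨l, by simp only [Finset.mem_Ioc]; omega⟩
    linarith
  have hFpos : ∀ k, 1 ≤ k → k ≤ K → 0 < F k := by
    intro k h1 h2
    have := hFlt 0 k h1 h2
    linarith [hF0, this]
  have hσlow : ∀ m, 1 ≤ m → m ≤ I → 1 ≤ σ m := by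
    intro m h1 h2
    rcases eq_or_lt_of_le h1 with h | h
    · rw [← h, hσ1]
    · have h' := hσmono 1 m le_rfl h h2
      rw [hσ1] at h'
      omega
  have hσhigh : ∀ m, 1 ≤ m → m ≤ I → σ m ≤ K := by
    intro m h1 h2
    rcases eq_or_lt_of_le h2 with h | h
    · rw [h, hσI]
    · have h' := hσmono m I h1 h le_rfl
      rw [hσI] at h'
      omega
  have hFσ : ∀ a b, 1 ≤ a → a < b → b ≤ I → F (σ a) < F (σ b) := by
    intro a b h1 h2 h3
    exact hFlt (σ a) (σ b) (hσmono a b h1 h2 h3) (hσhigh b (by omega) h3)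
  -- ------------------------------------------------------------------
  -- Monotonicity of the crossing points along the dominating sequence
  -- ------------------------------------------------------------------
  have hchain : ∀ m, 2 ≤ m → m < I → zc n F (σ (m-1)) (σ m) ≤ zc n F (σ m) (σ (m+1)) := by
    intro m h2 hmI
    have hstep := hmin (m-1) (by omega) (by omega) (σ (m+1))
      (hσmono (m-1) (m+1) (by omega) (by omega) (by omega))
      (hσhigh (m+1) (by omega) (by omega))
    rw [show m - 1 + 1 = m by omega] at hstep
    have hab : F (σ (m-1)) < F (σ m) := hFσ (m-1) m (by omega) (by omega) (by omega)
    have hbc : F (σ m) < F (σ (m+1)) := hFσ m (m+1) (by omega) (by omega) (by omega)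
    have hac : F (σ (m-1)) < F (σ (m+1)) := hab.trans hbc
    set t0 := zc n F (σ (m-1)) (σ m) with ht0def
    have heq := zc_eq n F (σ (m-1)) (σ m) hab
    have hle : F (σ (m+1)) * (n (σ (m-1)) + t0) ≤ F (σ (m-1)) * (n (σ (m+1)) + t0) :=
      (le_zc_iff n F (σ (m-1)) (σ (m+1)) hac t0).1 hstep
    rw [le_zc_iff n F (σ m) (σ (m+1)) hbc t0]
    exact z3' (F (σ (m-1))) (F (σ (m+1))) (F (σ m)) (n (σ (m-1))) (n (σ (m+1))) (n (σ m)) t0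
      (hFpos (σ (m-1)) (hσlow (m-1) (by omega) (by omega)) (hσhigh (m-1) (by omega) (by omega)))
      (hFpos (σ m) (hσlow m (by omega) (by omega)) (hσhigh m (by omega) (by omega)))
      heq hle
  have hchain' : ∀ j' j, 2 ≤ j → j ≤ j' → j' ≤ I →
      zc n F (σ (j-1)) (σ j) ≤ zc n F (σ (j'-1)) (σ j') := by
    intro j'
    induction j' with
    | zero => intro j h1 h2 h3; omega
    | succ j' ih =>
      intro j h1 h2 h3
      rcases eq_or_lt_of_le h2 with h | h
      · rw [h]
      · have step := hchain j' (by omega) (by omega)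
        rw [show j' + 1 - 1 = j' by omega]
        exact le_trans (ih j h1 (by omega) (by omega)) step
  -- ------------------------------------------------------------------
  -- The clamped water levels
  -- ------------------------------------------------------------------
  have hsw : s ≤ w := by
    by_contra hcon
    push_neg at hcon
    have h1 := hwmax s hcon hsI
    rcases hsle with h2 | h2
    · omega
    · linarith
  set a : ℕ → ℝ := fun m => if m ≤ s then 0 else if w < m then 1
      else max 0 (min 1 (zc n F (σ (m-1)) (σ m))) with ha_def
  have ha_s : ∀ m, m ≤ s → a m = 0 := by
    intro m h; simp only [ha_def, if_pos h]
  have ha_w : ∀ m, w < m → a m = 1 := by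
    intro m h; simp only [ha_def]; rw [if_neg (by omega), if_pos h]
  have hzzpos : ∀ m, s < m → m ≤ w → 0 < zc n F (σ (m-1)) (σ m) := by
    intro m h1 h2; exact hsmax m h1 (le_trans h2 hwI)
  have hzzlt1 : ∀ m, s < m → m ≤ w → zc n F (σ (m-1)) (σ m) < 1 := by
    intro m h1 h2
    have hwlt' : zc n F (σ (w-1)) (σ w) < 1 := by
      rcases hwlt with h | h
      · omega
      · exact h
    exact lt_of_le_of_lt (hchain' w m (by omega) h2 hwI) hwlt'
  have ha_int : ∀ m, s < m → m ≤ w → a m = zc n F (σ (m-1)) (σ m) := by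
    intro m h1 h2
    simp only [ha_def]
    rw [if_neg (by omega), if_neg (by omega), min_eq_right (hzzlt1 m h1 h2).le,
      max_eq_right (by linarith [hzzpos m h1 h2])]
  have ha0 : ∀ m, 0 ≤ a m := by
    intro m
    simp only [ha_def]
    split
    · exact le_rfl
    · split
      · exact zero_le_one
      · exact le_max_left _ _
  have ha1 : ∀ m, a m ≤ 1 := by
    intro m
    simp only [ha_def]
    split
    · exact zero_le_one
    · split
      · exact le_rfl
      · exact max_le zero_le_one (min_le_left _ _)
  have hamono : Monotone a := by
    apply monotone_nat_of_le_succ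
    intro m
    by_cases h1 : m + 1 ≤ s
    · rw [ha_s m (by omega), ha_s (m+1) h1]
    · by_cases h2 : m ≤ s
      · rw [ha_s m h2]; exact ha0 _
      · by_cases h3 : w < m
        · rw [ha_w m h3, ha_w (m+1) (by omega)]
        · by_cases h4 : w < m + 1
          · rw [ha_w (m+1) h4]; exact ha1 _
          · rw [ha_int m (by omega) (by omega), ha_int (m+1) (by omega) (by omega),
              show m + 1 - 1 = m by omega]
            exact hchain m (by omega) (by omega)
  -- ------------------------------------------------------------------
  -- Domination of the marginal utility of the active state
  -- ------------------------------------------------------------------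
  have domLow : ∀ m, 1 ≤ m → m ≤ I → ∀ t, (2 ≤ m → zc n F (σ (m-1)) (σ m) ≤ t) →
      ∀ k, 1 ≤ k → k ≤ σ m → F k * (n (σ m) + t) ≤ F (σ m) * (n k + t) := by
    intro m
    induction m using Nat.strong_induction_on with
    | _ m IH =>
      intro h1 h2 t ht k hk1 hk2
      rcases eq_or_lt_of_le h1 with hm1 | hm1
      · have hσm : σ m = 1 := by rw [← hm1, hσ1]
        have hkm : k = σ m := by omega
        rw [hkm]
      · have h2m : 2 ≤ m := hm1
        have ht0t := ht h2m
        rcases eq_or_lt_of_le hk2 with hk | hk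
        · rw [hk]
        · set t0 := zc n F (σ (m-1)) (σ m) with ht0def
          have hab : F (σ (m-1)) < F (σ m) := hFσ (m-1) m (by omega) (by omega) h2
          have heq := zc_eq n F (σ (m-1)) (σ m) hab
          have hFa : 0 < F (σ (m-1)) :=
            hFpos (σ (m-1)) (hσlow (m-1) (by omega) (by omega)) (hσhigh (m-1) (by omega) (by omega))
          have hFc : 0 < F (σ m) := hFpos (σ m) (hσlow m h1 h2) (hσhigh m h1 h2)
          have hat0 : F k * (n (σ m) + t0) ≤ F (σ m) * (n k + t0) := by
            rcases lt_trichotomy k (σ (m-1)) with hlt | heqk | hgt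
            · have hIH := IH (m-1) (by omega) (by omega) (by omega) t0
                (fun h2' => by
                  have hc := hchain (m-1) h2' (by omega)
                  rw [show m - 1 + 1 = m by omega] at hc
                  exact hc) k hk1 (by omega)
              exact z3' (F (σ (m-1))) (F k) (F (σ m)) (n (σ (m-1))) (n k) (n (σ m)) t0
                hFa hFc heq hIH
            · rw [heqk]
              exact le_of_eq heq
            · have hkK : k ≤ K := le_trans hk.le (hσhigh m h1 h2)
              have hmk : F (σ (m-1)) < F k := hFlt _ _ hgt hkK
              have hstep := hmin (m-1) (by omega) (by omega) k hgt hkK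
              rw [show m - 1 + 1 = m by omega] at hstep
              have hle : F k * (n (σ (m-1)) + t0) ≤ F (σ (m-1)) * (n k + t0) :=
                (le_zc_iff n F (σ (m-1)) k hmk t0).1 hstep
              exact z3' (F (σ (m-1))) (F k) (F (σ m)) (n (σ (m-1))) (n k) (n (σ m)) t0
                hFa hFc heq hle
          have hFk : F k < F (σ m) := hFlt k (σ m) hk (hσhigh m h1 h2)
          nlinarith [hat0, mul_nonneg (sub_nonneg.2 hFk.le) (sub_nonneg.2 ht0t)]
  have domHigh : ∀ m, 1 ≤ m → m < I → ∀ t, t ≤ zc n F (σ m) (σ (m+1)) →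
      ∀ k, σ m < k → k ≤ K → F k * (n (σ m) + t) ≤ F (σ m) * (n k + t) := by
    intro m h1 h2 t ht k hk1 hk2
    have hmk : F (σ m) < F k := hFlt _ _ hk1 hk2
    have hstep := hmin m h1 h2 k hk1 hk2
    exact (le_zc_iff n F (σ m) k hmk t).1 (le_trans ht hstep)
  have domAll : ∀ m, s ≤ m → m ≤ w → ∀ t, a m ≤ t → t ≤ a (m+1) →
      ∀ k, 1 ≤ k → k ≤ K → F k * (n (σ m) + t) ≤ F (σ m) * (n k + t) := by
    intro m hm1 hm2 t ht1 ht2 k hk1 hk2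
    have hmI : m ≤ I := le_trans hm2 hwI
    have hm1' : 1 ≤ m := le_trans hs1 hm1
    rcases le_or_gt k (σ m) with hk | hk
    · apply domLow m hm1' hmI t _ k hk1 hk
      intro h2m
      rcases eq_or_lt_of_le hm1 with he | hlt
      · have h0t : (0:ℝ) ≤ t := by
          rw [← ha_s m (by omega)]
          exact ht1
        rcases hsle with h | h
        · omega
        · rw [← he] at *
          linarith
      · rw [ha_int m hlt hm2] at ht1
        exact ht1
    · have hmI' : m < I := by
        rcases eq_or_lt_of_le hmI with he | h
        · exfalso
          rw [he, hσI] at hk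
          omega
        · exact h
      apply domHigh m hm1' hmI' t _ k hk hk2
      rcases lt_or_ge m w with hmw | hmw
      · have := ha_int (m+1) (by omega) (by omega)
        rw [show m + 1 - 1 = m by omega] at this
        rw [this] at ht2
        exact ht2
      · have hmweq : m = w := le_antisymm hm2 hmw
        have hw' := hwmax (m+1) (by omega) (by omega)
        rw [show m + 1 - 1 = m by omega] at hw'
        rw [ha_w (m+1) (by omega)] at ht2
        linarith
  -- ------------------------------------------------------------------
  -- Value of the candidate optimum (telescoping)
  -- ------------------------------------------------------------------
  have hT : ∑ m ∈ Finset.Icc s w,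
        F (σ m) * (Real.log (n (σ m) + a (m+1)) - Real.log (n (σ m) + a m)) =
      F (σ s) * Real.log (F (σ s) / n (σ s)) +
      (∑ m ∈ Finset.Icc (s + 1) w,
        (F (σ m) - F (σ (m - 1))) *
          Real.log ((F (σ m) - F (σ (m - 1))) / (n (σ m) - n (σ (m - 1))))) +
      F (σ w) * Real.log ((n (σ w) + 1) / F (σ w)) := by
    have hsplit : ∑ m ∈ Finset.Icc s w,
        F (σ m) * (Real.log (n (σ m) + a (m+1)) - Real.log (n (σ m) + a m)) =
        (∑ m ∈ Finset.Icc s w, F (σ m) * Real.log (n (σ m) + a (m+1)))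
        - ∑ m ∈ Finset.Icc s w, F (σ m) * Real.log (n (σ m) + a m) := by
      rw [← Finset.sum_sub_distrib]
      apply Finset.sum_congr rfl
      intro m _
      ring
    rw [hsplit]
    rw [sum_shift (fun m => F (σ m) * Real.log (n (σ m) + a (m+1))) s w hsw]
    rw [← Finset.insert_Icc_add_one_left_eq_Icc hsw, Finset.sum_insert (by simp)]
    have hmerge : (∑ m ∈ Finset.Icc (s+1) w,
          F (σ (m-1)) * Real.log (n (σ (m-1)) + a (m-1+1)))
        - ∑ m ∈ Finset.Icc (s+1) w, F (σ m) * Real.log (n (σ m) + a m)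
        = ∑ m ∈ Finset.Icc (s+1) w,
            (F (σ (m-1)) * Real.log (n (σ (m-1)) + a m)
              - F (σ m) * Real.log (n (σ m) + a m)) := by
      rw [← Finset.sum_sub_distrib]
      apply Finset.sum_congr rfl
      intro m hm
      simp only [Finset.mem_Icc] at hm
      rw [show m - 1 + 1 = m by omega]
    have hkey : ∀ m ∈ Finset.Icc (s+1) w,
        F (σ (m-1)) * Real.log (n (σ (m-1)) + a m) - F (σ m) * Real.log (n (σ m) + a m)
        = (F (σ (m-1)) * Real.log (F (σ (m-1))) - F (σ m) * Real.log (F (σ m)))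
          + (F (σ m) - F (σ (m-1))) *
            Real.log ((F (σ m) - F (σ (m-1))) / (n (σ m) - n (σ (m-1)))) := by
      intro m hm
      simp only [Finset.mem_Icc] at hm
      have hmI : m ≤ I := le_trans hm.2 hwI
      have hab : F (σ (m-1)) < F (σ m) := hFσ (m-1) m (by omega) (by omega) hmI
      have hnab : n (σ (m-1)) < n (σ m) :=
        hnlt (σ (m-1)) (σ m) (hσlow (m-1) (by omega) (by omega))
          (hσmono (m-1) m (by omega) (by omega) hmI) (hσhigh m (by omega) hmI)
      have hFa : 0 < F (σ (m-1)) :=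
        hFpos (σ (m-1)) (hσlow (m-1) (by omega) (by omega)) (hσhigh (m-1) (by omega) (by omega))
      have hFb : 0 < F (σ m) := hFpos (σ m) (hσlow m (by omega) hmI) (hσhigh m (by omega) hmI)
      have hdF : (0:ℝ) < F (σ m) - F (σ (m-1)) := by linarith
      have hdn : (0:ℝ) < n (σ m) - n (σ (m-1)) := by linarith
      rw [ha_int m (by omega) hm.2, zc_add_l n F _ _ hab, zc_add_r n F _ _ hab,
        mul_div_assoc, mul_div_assoc,
        Real.log_mul (ne_of_gt hFa) (ne_of_gt (div_pos hdn hdF)),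
        Real.log_mul (ne_of_gt hFb) (ne_of_gt (div_pos hdn hdF)),
        Real.log_div (ne_of_gt hdn) (ne_of_gt hdF),
        Real.log_div (ne_of_gt hdF) (ne_of_gt hdn)]
      ring
    have hgoal : (∑ m ∈ Finset.Icc (s+1) w,
          F (σ (m-1)) * Real.log (n (σ (m-1)) + a (m-1+1)))
        - ∑ m ∈ Finset.Icc (s+1) w, F (σ m) * Real.log (n (σ m) + a m)
        = (F (σ s) * Real.log (F (σ s)) - F (σ w) * Real.log (F (σ w)))
          + ∑ m ∈ Finset.Icc (s+1) w, (F (σ m) - F (σ (m-1))) *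
              Real.log ((F (σ m) - F (σ (m-1))) / (n (σ m) - n (σ (m-1)))) := by
      rw [hmerge, Finset.sum_congr rfl hkey, Finset.sum_add_distrib,
        tele2 (fun m => F (σ m) * Real.log (F (σ m))) s w hsw]
    rw [ha_w (w+1) (by omega), ha_s s le_rfl, add_zero]
    have hFs : 0 < F (σ s) := hFpos (σ s) (hσlow s hs1 hsI) (hσhigh s hs1 hsI)
    have hns : 0 < n (σ s) := hnpos (σ s) (hσlow s hs1 hsI) (hσhigh s hs1 hsI)
    have hFw : 0 < F (σ w) := hFpos (σ w) (hσlow w hw1 hwI) (hσhigh w hw1 hwI)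
    have hnw : 0 < n (σ w) := hnpos (σ w) (hσlow w hw1 hwI) (hσhigh w hw1 hwI)
    rw [Real.log_div (ne_of_gt hFs) (ne_of_gt hns),
      Real.log_div (by positivity : (n (σ w) + 1) ≠ 0) (ne_of_gt hFw)]
    linear_combination hgoal
  -- ------------------------------------------------------------------
  -- Conversion of the objective terms
  -- ------------------------------------------------------------------
  have hconv : ∀ (b b' : ℝ), 0 ≤ b → 0 ≤ b' → ∀ k, 1 ≤ k → k ≤ K →
      F k * Real.log ((1 + b * g k) / (1 + b' * g k)) =
      F k * (Real.log (n k + b) - Real.log (n k + b')) := by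
    intro b b' hb hb' k h1 h2
    have hgk := hgpos k h1 h2
    have hnk := hnpos k h1 h2
    have e1 : 1 + b * g k = g k * (n k + b) := by
      rw [hn]
      field_simp
    have e2 : 1 + b' * g k = g k * (n k + b') := by
      rw [hn]
      field_simp
    have p1 : (0:ℝ) < 1 + b * g k := by nlinarith
    have p2 : (0:ℝ) < 1 + b' * g k := by nlinarith
    rw [Real.log_div (ne_of_gt p1) (ne_of_gt p2), e1, e2,
      Real.log_mul (ne_of_gt hgk) (ne_of_gt (by nlinarith : (0:ℝ) < n k + b)),
      Real.log_mul (ne_of_gt hgk) (ne_of_gt (by nlinarith : (0:ℝ) < n k + b'))]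
    ring
  -- ------------------------------------------------------------------
  -- Upper bound
  -- ------------------------------------------------------------------
  have hub : ∀ r ∈ CexpSet K g F, r ≤ ∑ m ∈ Finset.Icc s w,
      F (σ m) * (Real.log (n (σ m) + a (m+1)) - Real.log (n (σ m) + a m)) := by
    rintro r ⟨β, hβ0, hβm, hβK, hr⟩
    have hβmono : ∀ d k, k + d ≤ K → β k ≤ β (k + d) := by
      intro d
      induction d with
      | zero => intro k _; simp
      | succ d ih =>
        intro k h
        have h1 := ih k (by omega)
        have h2 := hβm (k+d+1) (by omega) (by omega)
        rw [show k + d + 1 - 1 = k + d by omega] at h2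
        calc β k ≤ β (k+d) := h1
          _ ≤ β (k+(d+1)) := by rw [show k + (d+1) = k+d+1 by omega]; exact h2
    have hβ01 : ∀ k, k ≤ K → 0 ≤ β k ∧ β k ≤ 1 := by
      intro k hk
      constructor
      · have := hβmono k 0 (by omega)
        rw [hβ0] at this
        simpa using this
      · have := hβmono (K - k) k (by omega)
        rw [show k + (K-k) = K by omega] at this
        linarith
    rw [hr, Finset.sum_congr rfl (fun k hk => by
      simp only [Finset.mem_Icc] at hk
      exact hconv (β k) (β (k-1)) (hβ01 k hk.2).1 (hβ01 (k-1) (by omega)).1 k hk.1 hk.2)]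
    -- partition of each increment along the water levels
    have hpart : ∀ k, 1 ≤ k → k ≤ K →
        Real.log (n k + β k) - Real.log (n k + β (k-1)) =
        ∑ m ∈ Finset.Icc s w,
          (Real.log (n k + max (a m) (min (β k) (a (m+1))))
            - Real.log (n k + max (a m) (min (β (k-1)) (a (m+1))))) := by
      intro k h1 h2
      have P1 := partition_sum a hamono (fun t => Real.log (n k + t)) s w hsw (β k)
        (by rw [ha_s s le_rfl]; exact (hβ01 k h2).1)
        (by rw [ha_w (w+1) (by omega)]; exact (hβ01 k h2).2)
      have P2 := partition_sum a hamono (fun t => Real.log (n k + t)) s w hsw (β (k-1))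
        (by rw [ha_s s le_rfl]; exact (hβ01 (k-1) (by omega)).1)
        (by rw [ha_w (w+1) (by omega)]; exact (hβ01 (k-1) (by omega)).2)
      have e : ∀ m ∈ Finset.Icc s w,
          (Real.log (n k + max (a m) (min (β k) (a (m+1))))
            - Real.log (n k + max (a m) (min (β (k-1)) (a (m+1)))))
          = (Real.log (n k + max (a m) (min (β k) (a (m+1)))) - Real.log (n k + a m))
            - (Real.log (n k + max (a m) (min (β (k-1)) (a (m+1)))) - Real.log (n k + a m)) := by
        intro m _
        ring
      rw [Finset.sum_congr rfl e, Finset.sum_sub_distrib, P1, P2]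
      ring
    calc ∑ k ∈ Finset.Icc 1 K, F k * (Real.log (n k + β k) - Real.log (n k + β (k-1)))
        = ∑ k ∈ Finset.Icc 1 K, ∑ m ∈ Finset.Icc s w,
            F k * (Real.log (n k + max (a m) (min (β k) (a (m+1))))
              - Real.log (n k + max (a m) (min (β (k-1)) (a (m+1))))) := by
          apply Finset.sum_congr rfl
          intro k hk
          simp only [Finset.mem_Icc] at hk
          rw [hpart k hk.1 hk.2, Finset.mul_sum]
      _ = ∑ m ∈ Finset.Icc s w, ∑ k ∈ Finset.Icc 1 K,
            F k * (Real.log (n k + max (a m) (min (β k) (a (m+1))))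
              - Real.log (n k + max (a m) (min (β (k-1)) (a (m+1))))) := Finset.sum_comm
      _ ≤ ∑ m ∈ Finset.Icc s w, ∑ k ∈ Finset.Icc 1 K,
            F (σ m) * (Real.log (n (σ m) + max (a m) (min (β k) (a (m+1))))
              - Real.log (n (σ m) + max (a m) (min (β (k-1)) (a (m+1))))) := by
          apply Finset.sum_le_sum
          intro m hm
          apply Finset.sum_le_sum
          intro k hk
          simp only [Finset.mem_Icc] at hm hk
          have hbb : β (k-1) ≤ β k := hβm k hk.1 hk.2
          have hxy : max (a m) (min (β (k-1)) (a (m+1))) ≤ max (a m) (min (β k) (a (m+1))) :=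
            max_le_max le_rfl (min_le_min hbb le_rfl)
          have hax : a m ≤ max (a m) (min (β (k-1)) (a (m+1))) := le_max_left _ _
          have hya : max (a m) (min (β k) (a (m+1))) ≤ a (m+1) :=
            max_le (hamono (Nat.le_succ m)) (min_le_right _ _)
          have hnm : 0 < n (σ m) :=
            hnpos (σ m) (hσlow m (le_trans hs1 hm.1) (le_trans hm.2 hwI))
              (hσhigh m (le_trans hs1 hm.1) (le_trans hm.2 hwI))
          have hnk : 0 < n k := hnpos k hk.1 hk.2
          have ham0 : (0:ℝ) ≤ a m := ha0 m
          apply logL (F (σ m)) (F k) (n (σ m)) (n k) _ _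
            (by linarith) (by linarith) hxy
          intro t ht1 ht2
          exact domAll m hm.1 hm.2 t (le_trans hax ht1) (le_trans ht2 hya) k hk.1 hk.2
      _ = ∑ m ∈ Finset.Icc s w,
            F (σ m) * (Real.log (n (σ m) + max (a m) (min (β K) (a (m+1))))
              - Real.log (n (σ m) + a m)) := by
          apply Finset.sum_congr rfl
          intro m _
          have e : ∀ k ∈ Finset.Icc 1 K,
              F (σ m) * (Real.log (n (σ m) + max (a m) (min (β k) (a (m+1))))
                - Real.log (n (σ m) + max (a m) (min (β (k-1)) (a (m+1)))))
              = (fun j => F (σ m) * Real.log (n (σ m) + max (a m) (min (β j) (a (m+1))))) k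
                - (fun j => F (σ m) * Real.log (n (σ m) + max (a m) (min (β j) (a (m+1))))) (k-1) := by
            intro k _
            simp only
            ring
          rw [Finset.sum_congr rfl e,
            tele1 (fun j => F (σ m) * Real.log (n (σ m) + max (a m) (min (β j) (a (m+1))))) K]
          simp only [hβ0]
          rw [min_eq_left (ha0 (m+1)), max_eq_left (ha0 m)]
          ring
      _ ≤ ∑ m ∈ Finset.Icc s w,
            F (σ m) * (Real.log (n (σ m) + a (m+1)) - Real.log (n (σ m) + a m)) := by
          apply Finset.sum_le_sum
          intro m hm
          simp only [Finset.mem_Icc] at hm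
          have hm1 : 1 ≤ m := le_trans hs1 hm.1
          have hmI : m ≤ I := le_trans hm.2 hwI
          have hnm : 0 < n (σ m) := hnpos (σ m) (hσlow m hm1 hmI) (hσhigh m hm1 hmI)
          have hFm : 0 ≤ F (σ m) := (hFpos (σ m) (hσlow m hm1 hmI) (hσhigh m hm1 hmI)).le
          have hax : a m ≤ max (a m) (min (β K) (a (m+1))) := le_max_left _ _
          have hya : max (a m) (min (β K) (a (m+1))) ≤ a (m+1) :=
            max_le (hamono (Nat.le_succ m)) (min_le_right _ _)
          have h0 : (0:ℝ) ≤ a m := ha0 m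
          apply mul_le_mul_of_nonneg_left _ hFm
          apply sub_le_sub_right
          exact Real.log_le_log (by linarith) (by linarith)
  -- ------------------------------------------------------------------
  -- The optimum is attained
  -- ------------------------------------------------------------------
  classical
  have hmem : (∑ m ∈ Finset.Icc s w,
      F (σ m) * (Real.log (n (σ m) + a (m+1)) - Real.log (n (σ m) + a m))) ∈ CexpSet K g F := by
    set μ : ℕ → ℕ := fun k => Nat.findGreatest (fun m => σ m ≤ k) I with hμdef
    set β : ℕ → ℝ := fun k => if k = 0 then 0 else a (μ k + 1) with hβdef
    have hμle : ∀ k, μ k ≤ I := by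
      intro k
      rw [hμdef]
      exact Nat.findGreatest_le I
    have hμmono : ∀ k k', k ≤ k' → μ k ≤ μ k' := by
      intro k k' h
      rw [hμdef]
      exact Nat.findGreatest_mono (fun m hm => le_trans hm h) le_rfl
    have hμ1 : ∀ k, 1 ≤ k → 1 ≤ μ k := by
      intro k hk
      rw [hμdef]
      exact Nat.le_findGreatest (P := fun m => σ m ≤ k) hI (show σ 1 ≤ k by rw [hσ1]; exact hk)
    have hμspec : ∀ k, 1 ≤ k → σ (μ k) ≤ k := by
      intro k hk
      rw [hμdef]
      exact Nat.findGreatest_spec (P := fun m => σ m ≤ k) hI (show σ 1 ≤ k by rw [hσ1]; exact hk)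
    have hμσ : ∀ m, 1 ≤ m → m ≤ I → μ (σ m) = m := by
      intro m h1 h2
      apply le_antisymm
      · by_contra hcon
        push_neg at hcon
        have h4 : σ (μ (σ m)) ≤ σ m := hμspec (σ m) (hσlow m h1 h2)
        have h5 := hσmono m (μ (σ m)) h1 hcon (hμle (σ m))
        omega
      · rw [hμdef]
        exact Nat.le_findGreatest (P := fun j => σ j ≤ σ m) h2 le_rfl
    have hβnonneg : ∀ k, 0 ≤ β k := by
      intro k
      simp only [hβdef]
      split
      · exact le_rfl
      · exact ha0 _
    have hβm2 : ∀ k, 1 ≤ k → k ≤ K → β (k-1) ≤ β k := by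
      intro k h1 h2
      by_cases hk1 : k = 1
      · subst hk1
        simp only [hβdef, if_pos rfl, if_neg (by omega : ¬(1:ℕ) = 0)]
        exact ha0 _
      · simp only [hβdef, if_neg (by omega : ¬k = 0), if_neg (by omega : ¬k - 1 = 0)]
        exact hamono (Nat.add_le_add_right (hμmono (k-1) k (by omega)) 1)
    have hβKval : β K = 1 := by
      have hμK : μ K = I := by
        apply le_antisymm (hμle K)
        rw [hμdef]
        exact Nat.le_findGreatest (P := fun m => σ m ≤ K) le_rfl (show σ I ≤ K by rw [hσI])
      simp only [hβdef, if_neg (by omega : ¬K = 0)]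
      rw [hμK]
      exact ha_w (I+1) (by omega)
    refine ⟨β, by simp [hβdef], hβm2, le_of_eq hβKval, ?_⟩
    symm
    have hval1 : ∀ k ∈ Finset.Icc 1 K,
        F k * Real.log ((1 + β k * g k)/(1 + β (k-1) * g k)) =
        F k * (Real.log (n k + β k) - Real.log (n k + β (k-1))) := by
      intro k hk
      simp only [Finset.mem_Icc] at hk
      exact hconv _ _ (hβnonneg k) (hβnonneg (k-1)) k hk.1 hk.2
    rw [Finset.sum_congr rfl hval1]
    have himg : Finset.image σ (Finset.Icc 1 I) ⊆ Finset.Icc 1 K := by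
      intro x hx
      simp only [Finset.mem_image, Finset.mem_Icc] at hx ⊢
      obtain ⟨m, hm, rfl⟩ := hx
      exact ⟨hσlow m hm.1 hm.2, hσhigh m hm.1 hm.2⟩
    have hzero : ∀ k ∈ Finset.Icc 1 K, k ∉ Finset.image σ (Finset.Icc 1 I) →
        F k * (Real.log (n k + β k) - Real.log (n k + β (k-1))) = 0 := by
      intro k hk hkn
      simp only [Finset.mem_Icc] at hk
      have hk2 : 2 ≤ k := by
        rcases eq_or_lt_of_le hk.1 with h | h
        · exfalso
          apply hkn
          simp only [Finset.mem_image]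
          exact ⟨1, by simp only [Finset.mem_Icc]; omega, by rw [hσ1]; omega⟩
        · omega
      have hne : σ (μ k) ≠ k := by
        intro hcontra
        apply hkn
        simp only [Finset.mem_image]
        exact ⟨μ k, by simp only [Finset.mem_Icc]; exact ⟨hμ1 k (by omega), hμle k⟩, hcontra⟩
      have h5 : σ (μ k) ≤ k - 1 := by
        have := hμspec k (by omega)
        omega
      have h6 : μ k ≤ μ (k-1) := by
        have h5' := h5
        rw [hμdef] at h5' ⊢
        exact Nat.le_findGreatest (P := fun j => σ j ≤ k - 1) (by rw [← hμdef]; exact hμle k) h5'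
      have h7 : μ (k-1) = μ k := le_antisymm (hμmono (k-1) k (by omega)) h6
      have hββ : β k = β (k-1) := by
        simp only [hβdef, if_neg (by omega : ¬k = 0), if_neg (by omega : ¬k - 1 = 0), h7]
      rw [hββ, sub_self, mul_zero]
    rw [← Finset.sum_subset himg hzero]
    have hinj : ∀ x ∈ Finset.Icc 1 I, ∀ y ∈ Finset.Icc 1 I, σ x = σ y → x = y := by
      intro x hx y hy hxy
      simp only [Finset.mem_Icc] at hx hy
      by_contra hne
      rcases Nat.lt_or_ge x y with h | h
      · have := hσmono x y hx.1 h hy.2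
        omega
      · have := hσmono y x hy.1 (by omega) hx.2
        omega
    rw [Finset.sum_image hinj]
    have hterm : ∀ m ∈ Finset.Icc 1 I,
        F (σ m) * (Real.log (n (σ m) + β (σ m)) - Real.log (n (σ m) + β (σ m - 1))) =
        F (σ m) * (Real.log (n (σ m) + a (m+1)) - Real.log (n (σ m) + a m)) := by
      intro m hm
      simp only [Finset.mem_Icc] at hm
      have hσm1 : 1 ≤ σ m := hσlow m hm.1 hm.2
      have hβσ : β (σ m) = a (m+1) := by
        simp only [hβdef, if_neg (by omega : ¬σ m = 0)]
        rw [hμσ m hm.1 hm.2]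
      have hβσ' : β (σ m - 1) = a m := by
        rcases eq_or_lt_of_le hm.1 with h1 | h1
        · have hσm : σ m = 1 := by rw [← h1, hσ1]
          rw [hσm]
          simp only [hβdef, if_pos rfl]
          rw [ha_s m (by omega)]
        · have hσm2 : 2 ≤ σ m := by
            have := hσmono 1 m le_rfl h1 hm.2
            rw [hσ1] at this
            omega
          have hμeq : μ (σ m - 1) = m - 1 := by
            apply le_antisymm
            · by_contra hcon
              push_neg at hcon
              have hsp : σ (μ (σ m - 1)) ≤ σ m - 1 := hμspec (σ m - 1) (by omega)
              have hge : m ≤ μ (σ m - 1) := by omega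
              have hσge : σ m ≤ σ (μ (σ m - 1)) := by
                rcases eq_or_lt_of_le hge with h | h
                · rw [← h]
                · exact (hσmono m _ hm.1 h (hμle _)).le
              omega
            · rw [hμdef]
              apply Nat.le_findGreatest (P := fun j => σ j ≤ σ m - 1) (by omega)
              show σ (m-1) ≤ σ m - 1
              have := hσmono (m-1) m (by omega) (by omega) hm.2
              omega
          simp only [hβdef, if_neg (by omega : ¬σ m - 1 = 0)]
          rw [hμeq, show m - 1 + 1 = m by omega]
      rw [hβσ, hβσ']
    rw [Finset.sum_congr rfl hterm]
    have hsub : Finset.Icc s w ⊆ Finset.Icc 1 I := by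
      intro x hx
      simp only [Finset.mem_Icc] at hx ⊢
      omega
    have hzero2 : ∀ m ∈ Finset.Icc 1 I, m ∉ Finset.Icc s w →
        F (σ m) * (Real.log (n (σ m) + a (m+1)) - Real.log (n (σ m) + a m)) = 0 := by
      intro m hm hmn
      simp only [Finset.mem_Icc] at hm hmn
      have haa : a (m+1) = a m := by
        rcases Nat.lt_or_ge m s with h | h
        · rw [ha_s m (by omega), ha_s (m+1) (by omega)]
        · have hwm : w < m := by omega
          rw [ha_w m hwm, ha_w (m+1) (by omega)]
      rw [haa, sub_self, mul_zero]
    rw [← Finset.sum_subset hsub hzero2]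
  rw [← hT]
  apply le_antisymm
  · exact csSup_le ⟨_, hmem⟩ hub
  · exact le_csSup ⟨_, fun r hr => hub r hr⟩ hmem
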